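/- Let g : ℝ³ → ℝ be a bounded function that is Lipschitz with constant L ≥ 0, let E, F ⊂ ℝ³ be bounded measurable sets, and let D ≥ 0 satisfy |x − y| ≤ D for all x ∈ E and y ∈ F. Then | ∫_E g dx − ∫_F g dx | ≤ |μ(E) − μ(F)| · ‖g‖_{L^∞(ℝ³)} + min{μ(E), μ(F)} · L · D, where μ denotes Lebesgue measure on ℝ³. -/

import Mathlib

open MeasureTheory

local notation "E3" => EuclideanSpace ℝ (Fin 3)

lemma aux_lip_sets (g : E3 → ℝ) (M C : ℝ) (hC : 0 ≤ C)
    (hM : ∀ x, |g x| ≤ M)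
    (hgm : AEStronglyMeasurable g volume)
    (E F : Set E3)
    (hEv : volume E < ⊤) (hFv : volume F < ⊤)
    (hgE : IntegrableOn g E volume) (hgF : IntegrableOn g F volume)
    (hLD : ∀ x ∈ E, ∀ y ∈ F, |g x - g y| ≤ C)
    (hle : volume E ≤ volume F) :
    |(∫ x in E, g x) - ∫ x in F, g x| ≤
      |(volume E).toReal - (volume F).toReal| * M + (volume E).toReal * C := by
  by_cases hE0 : volume E = 0
  · rw [Measure.restrict_eq_zero.mpr hE0] at *
    simp only [integral_zero_measure, hE0, ENNReal.toReal_zero, zero_mul, add_zero, zero_sub,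
      abs_neg]
    calc |∫ x in F, g x| ≤ M * (volume F).toReal := by
          have := norm_setIntegral_le_of_norm_le_const (f := g) (μ := volume) hFv
            (fun x _ => by rw [Real.norm_eq_abs]; exact hM x)
          rwa [Real.norm_eq_abs, measureReal_def] at this
      _ = |(volume F).toReal| * M := by
          rw [abs_of_nonneg ENNReal.toReal_nonneg, mul_comm]
  · have hF0 : volume F ≠ 0 := fun h => hE0 (le_antisymm (h ▸ hle) zero_le)
    have hFpos : 0 < (volume F).toReal := ENNReal.toReal_pos hF0 hFv.ne
    set c : ℝ := ((volume F).toReal)⁻¹ * ∫ y in F, g y with hc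
    have hFg : ∫ y in F, g y = c * (volume F).toReal := by
      rw [hc, mul_comm, mul_inv_cancel_left₀ hFpos.ne']
    -- |c| ≤ M
    have hMnn : 0 ≤ M := le_trans (abs_nonneg _) (hM 0)
    have hcM : |c| ≤ M := by
      rw [hc, abs_mul, abs_inv, abs_of_nonneg ENNReal.toReal_nonneg]
      rw [inv_mul_le_iff₀ hFpos]
      calc |∫ y in F, g y| ≤ M * (volume F).toReal := by
            have := norm_setIntegral_le_of_norm_le_const (f := g) (μ := volume) hFv
              (fun x _ => by rw [Real.norm_eq_abs]; exact hM x)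
            rwa [Real.norm_eq_abs, measureReal_def] at this
        _ = (volume F).toReal * M := mul_comm _ _
    -- pointwise bound on E
    have hpt : ∀ x ∈ E, |g x - c| ≤ C := by
      intro x hx
      have : g x - c = ((volume F).toReal)⁻¹ * ∫ y in F, (g x - g y) := by
        rw [integral_sub (integrableOn_const (C := g x) hFv.ne) hgF, setIntegral_const]
        field_simp [hc]
        rw [measureReal_def, hFg, smul_eq_mul]
        ring
      rw [this, abs_mul, abs_inv, abs_of_nonneg ENNReal.toReal_nonneg,
        inv_mul_le_iff₀ hFpos]
      calc |∫ y in F, (g x - g y)| ≤ C * (volume F).toReal := by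
            have := norm_setIntegral_le_of_norm_le_const (f := fun y => g x - g y) (μ := volume) hFv
              (fun y hy => by rw [Real.norm_eq_abs]; exact hLD x hx y hy)
            rwa [Real.norm_eq_abs, measureReal_def] at this
        _ = (volume F).toReal * C := mul_comm _ _
    -- decomposition
    have hdecomp : (∫ x in E, g x) - ∫ x in F, g x
        = (∫ x in E, (g x - c)) + c * ((volume E).toReal - (volume F).toReal) := by
      rw [integral_sub hgE (integrableOn_const (C := c) hEv.ne), setIntegral_const, hFg]
      simp [smul_eq_mul, measureReal_def]; ring
    rw [hdecomp]
    calc |(∫ x in E, (g x - c)) + c * ((volume E).toReal - (volume F).toReal)|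
        ≤ |∫ x in E, (g x - c)| + |c * ((volume E).toReal - (volume F).toReal)| := abs_add_le _ _
      _ ≤ C * (volume E).toReal + |c| * |(volume E).toReal - (volume F).toReal| := by
          gcongr
          · have := norm_setIntegral_le_of_norm_le_const (f := fun x => g x - c) (μ := volume) hEv
              (fun x hx => by rw [Real.norm_eq_abs]; exact hpt x hx)
            rwa [Real.norm_eq_abs, measureReal_def] at this
          · rw [abs_mul]
      _ ≤ C * (volume E).toReal + M * |(volume E).toReal - (volume F).toReal| := by
          gcongr
      _ = |(volume E).toReal - (volume F).toReal| * M + (volume E).toReal * C := by ring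

/-- For a bounded `L`-Lipschitz function `g` and bounded measurable sets
`E, F ⊂ ℝ³` with `|x − y| ≤ D` for all `x ∈ E`, `y ∈ F`,
`|∫_E g − ∫_F g| ≤ ||E| − |F|| ‖g‖_∞ + min{|E|, |F|} L D`. -/
theorem integral_same_function_different_sets
    (g : E3 → ℝ) (L D : ℝ) (hL : 0 ≤ L) (hD : 0 ≤ D)
    (hgbd : BddAbove (Set.range fun x => |g x|))
    (hglip : ∀ x y : E3, |g x - g y| ≤ L * dist x y)
    (E F : Set E3) (hE : MeasurableSet E) (hF : MeasurableSet F)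
    (hEbd : Bornology.IsBounded E) (hFbd : Bornology.IsBounded F)
    (hEF : ∀ x ∈ E, ∀ y ∈ F, dist x y ≤ D) :
    |(∫ x in E, g x) - ∫ x in F, g x| ≤
      |(volume E).toReal - (volume F).toReal| * (⨆ x : E3, |g x|) +
        min (volume E).toReal (volume F).toReal * L * D := by
  set M : ℝ := ⨆ x : E3, |g x| with hMdef
  have hM : ∀ x, |g x| ≤ M := fun x => le_ciSup hgbd x
  have hgc : Continuous g := by
    have : LipschitzWith (Real.toNNReal L) g := by
      intro x y
      rw [edist_dist, edist_dist, Real.dist_eq, ← ENNReal.ofReal_coe_nnreal,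
        Real.coe_toNNReal _ hL, ← ENNReal.ofReal_mul hL]
      exact ENNReal.ofReal_le_ofReal (hglip x y)
    exact this.continuous
  have hgm : AEStronglyMeasurable g volume := hgc.aestronglyMeasurable
  have hEv : volume E < ⊤ := hEbd.measure_lt_top
  have hFv : volume F < ⊤ := hFbd.measure_lt_top
  have hgE : IntegrableOn g E volume :=
    Measure.integrableOn_of_bounded hEv.ne hgm (Filter.Eventually.of_forall hM)
  have hgF : IntegrableOn g F volume :=
    Measure.integrableOn_of_bounded hFv.ne hgm (Filter.Eventually.of_forall hM)
  have hC : 0 ≤ L * D := mul_nonneg hL hD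
  have hLD : ∀ x ∈ E, ∀ y ∈ F, |g x - g y| ≤ L * D := fun x hx y hy =>
    (hglip x y).trans (mul_le_mul_of_nonneg_left (hEF x hx y hy) hL)
  rcases le_total (volume E) (volume F) with h | h
  · have hmin : min (volume E).toReal (volume F).toReal = (volume E).toReal :=
      min_eq_left (ENNReal.toReal_le_toReal hEv.ne hFv.ne |>.mpr h)
    rw [hmin, mul_assoc]
    exact aux_lip_sets g M (L * D) hC hM hgm E F hEv hFv hgE hgF hLD h
  · have hmin : min (volume E).toReal (volume F).toReal = (volume F).toReal :=
      min_eq_right (ENNReal.toReal_le_toReal hFv.ne hEv.ne |>.mpr h)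
    rw [hmin, mul_assoc, abs_sub_comm ((volume E).toReal), abs_sub_comm]
    exact aux_lip_sets g M (L * D) hC hM hgm F E hFv hEv hgF hgE
      (fun x hx y hy => by rw [abs_sub_comm]; exact hLD y hy x hx) h
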